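/- For q = 6, λ = √3, the group G₆ generated by V = [[0,-1],[1,0]] and A₁ = [[1,√3],[0,1]] inside SL₂(ℝ) equals the set of matrices [[a, b√3],[c√3, d]] with a,b,c,d ∈ ℤ, ad − 3bc = 1, union the set of matrices [[a√3, b],[c, d√3]] with a,b,c,d ∈ ℤ, 3ad − bc = 1. -/

import Mathlib

open Matrix Matrix.SpecialLinearGroup

local notation "SL2R" => Matrix.SpecialLinearGroup (Fin 2) ℝ

lemma sq3 : Real.sqrt 3 ^ 2 = 3 := Real.sq_sqrt (by norm_num)

-- matrix product shapes
lemma mul_t1t1 (a b c d e f g h : ℤ) (s : ℝ) (hs : s ^ 2 = 3) :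
    (!![(a:ℝ), b*s; c*s, d] * !![(e:ℝ), f*s; g*s, h]) =
      !![((a*e+3*b*g : ℤ):ℝ), ((a*f+b*h:ℤ):ℝ)*s; ((c*e+d*g:ℤ):ℝ)*s, ((3*c*f+d*h:ℤ):ℝ)] := by
  ext i j
  fin_cases i <;> fin_cases j <;>
    simp [Matrix.mul_apply, Fin.sum_univ_two] <;> push_cast <;> ring_nf <;> (rw [hs]; ring)

lemma mul_t1t2 (a b c d e f g h : ℤ) (s : ℝ) (hs : s ^ 2 = 3) :
    (!![(a:ℝ), b*s; c*s, d] * !![(e:ℝ)*s, f; g, h*s]) =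
      !![((a*e+b*g : ℤ):ℝ)*s, ((a*f+3*b*h:ℤ):ℝ); ((3*c*e+d*g:ℤ):ℝ), ((c*f+d*h:ℤ):ℝ)*s] := by
  ext i j
  fin_cases i <;> fin_cases j <;>
    simp [Matrix.mul_apply, Fin.sum_univ_two] <;> push_cast <;> ring_nf <;> (rw [hs]; ring)

lemma mul_t2t1 (a b c d e f g h : ℤ) (s : ℝ) (hs : s ^ 2 = 3) :
    (!![(a:ℝ)*s, b; c, d*s] * !![(e:ℝ), f*s; g*s, h]) =
      !![((a*e+b*g : ℤ):ℝ)*s, ((3*a*f+b*h:ℤ):ℝ); ((c*e+3*d*g:ℤ):ℝ), ((c*f+d*h:ℤ):ℝ)*s] := by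
  ext i j
  fin_cases i <;> fin_cases j <;>
    simp [Matrix.mul_apply, Fin.sum_univ_two] <;> push_cast <;> ring_nf <;> (rw [hs]; ring)

lemma mul_t2t2 (a b c d e f g h : ℤ) (s : ℝ) (hs : s ^ 2 = 3) :
    (!![(a:ℝ)*s, b; c, d*s] * !![(e:ℝ)*s, f; g, h*s]) =
      !![((3*a*e+b*g : ℤ):ℝ), ((a*f+b*h:ℤ):ℝ)*s; ((c*e+d*g:ℤ):ℝ)*s, ((c*f+3*d*h:ℤ):ℝ)] := by
  ext i j
  fin_cases i <;> fin_cases j <;>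
    simp [Matrix.mul_apply, Fin.sum_univ_two] <;> push_cast <;> ring_nf <;> (rw [hs]; ring)

lemma sl2_inv_coe (M : SL2R) :
    ((M⁻¹ : SL2R) : Matrix (Fin 2) (Fin 2) ℝ) =
      !![(M : Matrix (Fin 2) (Fin 2) ℝ) 1 1, -((M : Matrix (Fin 2) (Fin 2) ℝ) 0 1);
         -((M : Matrix (Fin 2) (Fin 2) ℝ) 1 0), (M : Matrix (Fin 2) (Fin 2) ℝ) 0 0] := by
  rw [Matrix.SpecialLinearGroup.SL2_inv_expl]
  rfl

lemma A1_zpow_coe (A₁ : SL2R)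
    (hA₁ : (A₁ : Matrix (Fin 2) (Fin 2) ℝ) = !![1, Real.sqrt 3; 0, 1]) (m : ℤ) :
    ((A₁ ^ m : SL2R) : Matrix (Fin 2) (Fin 2) ℝ) = !![1, (m : ℝ) * Real.sqrt 3; 0, 1] := by
  have hinv : ((A₁⁻¹ : SL2R) : Matrix (Fin 2) (Fin 2) ℝ) = !![1, -Real.sqrt 3; 0, 1] := by
    rw [sl2_inv_coe, hA₁]
    norm_num
  induction m using Int.induction_on with
  | zero => simp [Matrix.SpecialLinearGroup.coe_one, Matrix.one_fin_two]
  | succ k ih =>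
      rw [_root_.zpow_add_one, Matrix.SpecialLinearGroup.coe_mul, ih, hA₁]
      ext i j
      fin_cases i <;> fin_cases j <;>
        simp [Matrix.mul_apply, Fin.sum_univ_two] <;> push_cast <;> ring
  | pred k ih =>
      rw [_root_.zpow_sub_one, Matrix.SpecialLinearGroup.coe_mul, ih, hinv]
      ext i j
      fin_cases i <;> fin_cases j <;>
        simp [Matrix.mul_apply, Fin.sum_univ_two] <;> push_cast <;> ring

lemma round_int (a m : ℤ) (hm : m ≠ 0) : ∃ n : ℤ, 2 * |a + n * m| ≤ |m| := by
  have key : ∀ m' : ℤ, 0 < m' → ∀ a' : ℤ, ∃ n : ℤ, 2 * |a' + n * m'| ≤ m' := by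
    intro m' h a'
    set q := (2*a' + m') / (2*m') with hq
    have hmod := Int.mul_ediv_add_emod (2*a' + m') (2*m')
    rw [← hq] at hmod
    have h0 : 0 ≤ (2*a' + m') % (2*m') := Int.emod_nonneg _ (by omega)
    have h1 : (2*a' + m') % (2*m') < 2*m' := Int.emod_lt_of_pos _ (by omega)
    refine ⟨-q, ?_⟩
    have hx : 2*(a' + -q*m') = (2*a'+m') % (2*m') - m' := by linear_combination (-1 : ℤ) * hmod
    rcases abs_cases (a' + -q * m') with ⟨he, _⟩ | ⟨he, _⟩ <;> rw [he] <;> omega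
  rcases hm.lt_or_gt with hneg | hpos
  · obtain ⟨n, hn⟩ := key (-m) (by omega) a
    exact ⟨-n, by rw [abs_of_neg hneg]; simpa [neg_mul, mul_neg] using hn⟩
  · obtain ⟨n, hn⟩ := key m hpos a
    exact ⟨n, by rw [abs_of_pos hpos]; exact hn⟩

lemma descent (V A₁ : SL2R)
    (hV : (V : Matrix (Fin 2) (Fin 2) ℝ) = !![0, -1; 1, 0])
    (hA₁ : (A₁ : Matrix (Fin 2) (Fin 2) ℝ) = !![1, Real.sqrt 3; 0, 1]) :
    ∀ n : ℕ, ∀ M : SL2R,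
      ((∃ a b c d : ℤ, (M : Matrix (Fin 2) (Fin 2) ℝ) =
          !![(a : ℝ), b * Real.sqrt 3; c * Real.sqrt 3, (d : ℝ)] ∧ a * d - 3 * b * c = 1 ∧
          3 * c ^ 2 ≤ (n : ℤ)) ∨
       (∃ a b c d : ℤ, (M : Matrix (Fin 2) (Fin 2) ℝ) =
          !![a * Real.sqrt 3, (b : ℝ); (c : ℝ), d * Real.sqrt 3] ∧ 3 * a * d - b * c = 1 ∧
          c ^ 2 ≤ (n : ℤ))) →
      M ∈ Subgroup.closure {V, A₁} := by
  have hVmem : V ∈ Subgroup.closure {V, A₁} := Subgroup.subset_closure (by simp)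
  have hAmem : A₁ ∈ Subgroup.closure {V, A₁} := Subgroup.subset_closure (by simp)
  have hzp := A1_zpow_coe A₁ hA₁
  intro n
  induction n using Nat.strong_induction_on with
  | _ n IH =>
    rintro M (⟨a, b, c, d, hM, hdet, hmeas⟩ | ⟨a, b, c, d, hM, hdet, hmeas⟩)
    · -- type 1
      by_cases hc : c = 0
      · -- base case
        subst hc
        have had : a * d = 1 := by linarith
        rcases Int.mul_eq_one_iff_eq_one_or_neg_one.mp had with ⟨ha, hd⟩ | ⟨ha, hd⟩
        · subst ha; subst hd
          have : M = A₁ ^ b := Subtype.ext (by rw [hzp, hM]; norm_num)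
          rw [this]
          exact Subgroup.zpow_mem _ hAmem b
        · subst ha; subst hd
          have : M = V * V * A₁ ^ (-b) := by
            apply Subtype.ext
            rw [Matrix.SpecialLinearGroup.coe_mul, Matrix.SpecialLinearGroup.coe_mul,
              hzp, hV, hM]
            ext i j
            fin_cases i <;> fin_cases j <;>
              simp [Matrix.mul_apply, Fin.sum_univ_two] <;> push_cast <;> ring
          rw [this]
          exact Subgroup.mul_mem _ (Subgroup.mul_mem _ hVmem hVmem) (Subgroup.zpow_mem _ hAmem (-b))
      · -- step: reduce
        obtain ⟨k, hk⟩ := round_int a (3 * c) (by omega)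
        set x : ℤ := a + 3 * k * c with hx
        have hx4 : 4 * x ^ 2 ≤ 9 * c ^ 2 := by
          have h2 : (2 * |a + k * (3*c)|) ^ 2 ≤ |3*c| ^ 2 := by
            apply pow_le_pow_left₀ (by positivity) hk
          rw [mul_pow, sq_abs, sq_abs] at h2
          calc 4 * x ^ 2 = 2 ^ 2 * (a + k * (3*c)) ^ 2 := by rw [hx]; ring
            _ ≤ (3*c) ^ 2 := h2
            _ = 9 * c ^ 2 := by ring
        have hlt : x ^ 2 < 3 * c ^ 2 := by nlinarith [sq_nonneg c, hc, Int.one_le_abs (show c ≠ 0 from hc), sq_abs c, Int.one_le_abs hc]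
        have hN : ((V * A₁ ^ k * M : SL2R) : Matrix (Fin 2) (Fin 2) ℝ) =
            !![((-c : ℤ) : ℝ) * Real.sqrt 3, ((-d : ℤ) : ℝ);
               ((a + 3*k*c : ℤ) : ℝ), ((b + k * d : ℤ) : ℝ) * Real.sqrt 3] := by
          rw [Matrix.SpecialLinearGroup.coe_mul, Matrix.SpecialLinearGroup.coe_mul,
            hzp, hV, hM]
          ext i j
          fin_cases i <;> fin_cases j <;>
            simp [Matrix.mul_apply, Fin.sum_univ_two] <;> push_cast <;> ring_nf <;>
              simp [sq3] <;> push_cast <;> ring_nf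
        have hNdet : 3 * (-c) * (b + k * d) - (-d) * x = 1 := by
          rw [hx]; linear_combination hdet
        have hNmem : V * A₁ ^ k * M ∈ Subgroup.closure {V, A₁} := by
          apply IH (x ^ 2).toNat
          · have h3 : (3 : ℤ) * c ^ 2 ≤ n := hmeas
            have : ((x ^ 2).toNat : ℤ) < (n : ℤ) := by
              rw [Int.toNat_of_nonneg (by positivity)]; linarith
            exact_mod_cast this
          · right
            exact ⟨-c, -d, x, b + k * d, hN, hNdet,
              by rw [Int.toNat_of_nonneg (by positivity)]⟩
        have hMeq : M = (V * A₁ ^ k)⁻¹ * (V * A₁ ^ k * M) := by group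
        rw [hMeq]
        exact Subgroup.mul_mem _
          (Subgroup.inv_mem _ (Subgroup.mul_mem _ hVmem (Subgroup.zpow_mem _ hAmem k))) hNmem
    · -- type 2
      by_cases hc : c = 0
      · exfalso
        subst hc
        have h3 : (3:ℤ) ∣ 1 := Dvd.intro (a*d) (by linarith)
        norm_num at h3
      · obtain ⟨k, hk⟩ := round_int a c hc
        set x : ℤ := a + k * c with hx
        have hx4 : 4 * x ^ 2 ≤ c ^ 2 := by
          have h2 : (2 * |a + k * c|) ^ 2 ≤ |c| ^ 2 := by
            apply pow_le_pow_left₀ (by positivity) hk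
          rw [mul_pow, sq_abs, sq_abs] at h2
          calc 4 * x ^ 2 = 2 ^ 2 * (a + k * c) ^ 2 := by rw [hx]; ring
            _ ≤ c ^ 2 := h2
        have hlt : 3 * x ^ 2 < c ^ 2 := by nlinarith [Int.one_le_abs hc, sq_abs c]
        have hN : ((V * A₁ ^ k * M : SL2R) : Matrix (Fin 2) (Fin 2) ℝ) =
            !![((-c : ℤ) : ℝ), ((-d : ℤ) : ℝ) * Real.sqrt 3;
               ((a + k*c : ℤ) : ℝ) * Real.sqrt 3, ((b + 3 * k * d : ℤ) : ℝ)] := by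
          rw [Matrix.SpecialLinearGroup.coe_mul, Matrix.SpecialLinearGroup.coe_mul,
            hzp, hV, hM]
          ext i j
          fin_cases i <;> fin_cases j <;>
            simp [Matrix.mul_apply, Fin.sum_univ_two] <;> push_cast <;> ring_nf <;>
              simp [sq3] <;> push_cast <;> ring_nf
        have hNdet : (-c) * (b + 3 * k * d) - 3 * (-d) * x = 1 := by
          rw [hx]; linear_combination hdet
        have hNmem : V * A₁ ^ k * M ∈ Subgroup.closure {V, A₁} := by
          apply IH (3 * x ^ 2).toNat
          · have : ((3 * x ^ 2).toNat : ℤ) < (n : ℤ) := by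
              rw [Int.toNat_of_nonneg (by positivity)]; linarith
            exact_mod_cast this
          · left
            exact ⟨-c, -d, x, b + 3 * k * d, hN, hNdet,
              by rw [Int.toNat_of_nonneg (by positivity)]⟩
        have hMeq : M = (V * A₁ ^ k)⁻¹ * (V * A₁ ^ k * M) := by group
        rw [hMeq]
        exact Subgroup.mul_mem _
          (Subgroup.inv_mem _ (Subgroup.mul_mem _ hVmem (Subgroup.zpow_mem _ hAmem k))) hNmem

theorem stmt_13 (V A₁ : Matrix.SpecialLinearGroup (Fin 2) ℝ)
    (hV : (V : Matrix (Fin 2) (Fin 2) ℝ) = !![0, -1; 1, 0])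
    (hA₁ : (A₁ : Matrix (Fin 2) (Fin 2) ℝ) = !![1, Real.sqrt 3; 0, 1]) :
    ∀ M : Matrix.SpecialLinearGroup (Fin 2) ℝ,
      M ∈ Subgroup.closure {V, A₁} ↔
      ((∃ a b c d : ℤ, (M : Matrix (Fin 2) (Fin 2) ℝ) =
          !![(a : ℝ), b * Real.sqrt 3; c * Real.sqrt 3, (d : ℝ)] ∧ a * d - 3 * b * c = 1) ∨
       (∃ a b c d : ℤ, (M : Matrix (Fin 2) (Fin 2) ℝ) =
          !![a * Real.sqrt 3, (b : ℝ); (c : ℝ), d * Real.sqrt 3] ∧ 3 * a * d - b * c = 1)) := by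
  intro M
  constructor
  · intro hM
    induction hM using Subgroup.closure_induction with
    | mem x hx =>
        rcases hx with rfl | rfl
        · right
          refine ⟨0, -1, 1, 0, ?_, by ring⟩
          rw [hV]; norm_num
        · left
          refine ⟨1, 1, 0, 1, ?_, by ring⟩
          rw [hA₁]; norm_num
    | one =>
        left
        refine ⟨1, 0, 0, 1, ?_, by ring⟩
        rw [Matrix.SpecialLinearGroup.coe_one, Matrix.one_fin_two]; norm_num
    | mul x y _ _ ihx ihy =>
        rw [Matrix.SpecialLinearGroup.coe_mul]
        rcases ihx with ⟨a, b, c, d, hx, h1⟩ | ⟨a, b, c, d, hx, h1⟩ <;>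
          rcases ihy with ⟨e, f, g, h, hy, h2⟩ | ⟨e, f, g, h, hy, h2⟩ <;>
            rw [hx, hy]
        · exact Or.inl ⟨a*e+3*b*g, a*f+b*h, c*e+d*g, 3*c*f+d*h,
            mul_t1t1 a b c d e f g h _ sq3, by linear_combination (e*h - 3*f*g) * h1 + h2⟩
        · exact Or.inr ⟨a*e+b*g, a*f+3*b*h, 3*c*e+d*g, c*f+d*h,
            mul_t1t2 a b c d e f g h _ sq3, by linear_combination (3*e*h - f*g) * h1 + h2⟩
        · exact Or.inr ⟨a*e+b*g, 3*a*f+b*h, c*e+3*d*g, c*f+d*h,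
            mul_t2t1 a b c d e f g h _ sq3, by linear_combination (e*h - 3*f*g) * h1 + h2⟩
        · exact Or.inl ⟨3*a*e+b*g, a*f+b*h, c*e+d*g, c*f+3*d*h,
            mul_t2t2 a b c d e f g h _ sq3, by linear_combination (3*e*h - f*g) * h1 + h2⟩
    | inv x _ ihx =>
        rw [sl2_inv_coe]
        rcases ihx with ⟨a, b, c, d, hx, h1⟩ | ⟨a, b, c, d, hx, h1⟩
        · left
          refine ⟨d, -b, -c, a, ?_, by linarith⟩
          rw [hx]
          push_cast
          norm_num [Matrix.of_apply]
        · right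
          refine ⟨d, -b, -c, a, ?_, by linarith⟩
          rw [hx]
          push_cast
          norm_num [Matrix.of_apply]
  · rintro (⟨a, b, c, d, hM, hdet⟩ | ⟨a, b, c, d, hM, hdet⟩)
    · exact descent V A₁ hV hA₁ (3 * c^2).toNat M
        (Or.inl ⟨a, b, c, d, hM, hdet, by rw [Int.toNat_of_nonneg (by positivity)]⟩)
    · exact descent V A₁ hV hA₁ (c^2).toNat M
        (Or.inr ⟨a, b, c, d, hM, hdet, by rw [Int.toNat_of_nonneg (by positivity)]⟩)
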